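/- Under the setup of independent h_t (mixture EGG with parameters α, β, a, b, c) and h_p (density μ² A₀^{−μ²} h^{μ²−1} on (0,A₀]), with constants h_a, P_t, η_r > 0 and ρ ∈ [0,1), the harvested power P_s = (1−ρ)η_r P_t·h_a h_t h_p has expectation E[P_s] = A₀ h_a (1−ρ) η_r P_t·(μ²/(1+μ²))·[αβ + (1−α) b Γ(a+1/c)/Γ(a)]. -/

import Mathlib

open MeasureTheory ProbabilityTheory Real Set
open scoped NNReal ENNReal

lemma aux_integrableOn_rpow_mul_exp_neg_mul_rpow {p q b : ℝ} (hp : 0 < p) (hq : -1 < q)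
    (hb : 0 < b) :
    IntegrableOn (fun x : ℝ => x ^ q * Real.exp (-b * x ^ p)) (Set.Ioi 0) := by
  set s : ℝ := (q + 1) / p with hs_def
  have hs : 0 < s := div_pos (by linarith) hp
  have h1 : IntegrableOn (fun y : ℝ => Real.exp (-y) * y ^ (s - 1)) (Set.Ioi 0) :=
    Real.GammaIntegral_convergent hs
  have h2 : IntegrableOn (fun y : ℝ => Real.exp (-(b * y)) * (b * y) ^ (s - 1)) (Set.Ioi 0) := by
    have h := (integrableOn_Ioi_comp_mul_left_iff
      (fun y : ℝ => Real.exp (-y) * y ^ (s - 1)) 0 hb).mpr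
    simp only [mul_zero] at h
    exact h h1
  have h3 := (integrableOn_Ioi_comp_rpow_iff'
    (fun y : ℝ => Real.exp (-(b * y)) * (b * y) ^ (s - 1)) (ne_of_gt hp)).mpr h2
  have h4 := h3.const_mul (b ^ (1 - s))
  refine IntegrableOn.congr_fun h4 (fun x hx => ?_) measurableSet_Ioi
  have hx0 : (0 : ℝ) < x := hx
  have e1 : x ^ (p - 1) * x ^ (p * (s - 1)) = x ^ q := by
    rw [← Real.rpow_add hx0]; congr 1
    have hpq : p * ((q + 1) / p) = q + 1 := by field_simp
    rw [hs_def]; linear_combination hpq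
  have e2 : b ^ (1 - s) * b ^ (s - 1) = 1 := by
    rw [← Real.rpow_add hb]; norm_num
  calc b ^ (1 - s) * (x ^ (p - 1) • (Real.exp (-(b * x ^ p)) * (b * x ^ p) ^ (s - 1)))
      = b ^ (1 - s) * (x ^ (p - 1) * (Real.exp (-(b * x ^ p)) *
          (b ^ (s - 1) * (x ^ p) ^ (s - 1)))) := by
        rw [smul_eq_mul, Real.mul_rpow hb.le (Real.rpow_nonneg hx0.le p)]
    _ = (b ^ (1 - s) * b ^ (s - 1)) * (x ^ (p - 1) * x ^ (p * (s - 1))) *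
          Real.exp (-(b * x ^ p)) := by
        rw [← Real.rpow_mul hx0.le]; ring
    _ = x ^ q * Real.exp (-b * x ^ p) := by
        rw [e1, e2, one_mul, neg_mul]

lemma aux_integral_id_withDensity (F : ℝ → ℝ) (hF : Measurable F) (hF0 : ∀ x, 0 ≤ F x) :
    ∫ x, x ∂(volume.withDensity (fun x => ENNReal.ofReal (F x))) = ∫ x, F x * x := by
  rw [show (fun x => ENNReal.ofReal (F x))
      = fun x => (((fun y => (F y).toNNReal) x : ℝ≥0) : ℝ≥0∞) from rfl,
    integral_withDensity_eq_integral_smul (f := fun y => (F y).toNNReal)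
      (measurable_real_toNNReal.comp hF) (fun x => x)]
  congr 1; funext x
  rw [NNReal.smul_def, Real.coe_toNNReal _ (hF0 x), smul_eq_mul]

lemma aux_Et (α β a b c : ℝ) (hα0 : 0 ≤ α) (hα1 : α ≤ 1)
    (hβ : 0 < β) (ha' : 0 < a) (hb : 0 < b) (hc : 0 < c) :
    ∫ x : ℝ, (if 0 < x then
        α / β * Real.exp (-x / β) +
          (1 - α) * (c * x ^ (a * c - 1) / (b ^ (a * c) * Real.Gamma a)) *
            Real.exp (-(x / b) ^ c)
      else 0) * x
      = α * β + (1 - α) * b * Real.Gamma (a + 1 / c) / Real.Gamma a := by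
  have hΓ : Real.Gamma a ≠ 0 := (Real.Gamma_pos_of_pos ha').ne'
  have hbac : (b : ℝ) ^ (a * c) ≠ 0 := (Real.rpow_pos_of_pos hb _).ne'
  have hfun : (fun x : ℝ => (if 0 < x then
        α / β * Real.exp (-x / β) +
          (1 - α) * (c * x ^ (a * c - 1) / (b ^ (a * c) * Real.Gamma a)) *
            Real.exp (-(x / b) ^ c)
      else 0) * x)
      = Set.indicator (Set.Ioi 0) (fun x : ℝ =>
          (α / β) * (x ^ (1 : ℝ) * Real.exp (-β⁻¹ * x ^ (1 : ℝ))) +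
          ((1 - α) * c / (b ^ (a * c) * Real.Gamma a)) *
            (x ^ (a * c) * Real.exp (-(b ^ (-c : ℝ)) * x ^ c))) := by
    funext x
    rw [Set.indicator_apply]
    simp only [Set.mem_Ioi]
    split_ifs with hx
    · have h3 : x ^ (a * c) = x ^ (a * c - 1) * x := by
        rw [← Real.rpow_add_one hx.ne']; norm_num
      have h4 : -(b ^ (-c : ℝ)) * x ^ c = -((x / b) ^ c) := by
        rw [Real.div_rpow hx.le hb.le, Real.rpow_neg hb.le]
        field_simp
      rw [Real.rpow_one, h4, h3]
      ring_nf
    · simp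
  rw [hfun, integral_indicator measurableSet_Ioi]
  have hq2 : (-1 : ℝ) < a * c := lt_trans (by norm_num) (mul_pos ha' hc)
  have i1 := (aux_integrableOn_rpow_mul_exp_neg_mul_rpow one_pos (by norm_num : (-1:ℝ) < 1)
    (inv_pos.mpr hβ)).const_mul (α / β)
  have i2 := (aux_integrableOn_rpow_mul_exp_neg_mul_rpow hc hq2
    (Real.rpow_pos_of_pos hb (-c))).const_mul ((1 - α) * c / (b ^ (a * c) * Real.Gamma a))
  rw [integral_add i1 i2, integral_const_mul, integral_const_mul,
    integral_rpow_mul_exp_neg_mul_rpow one_pos (by norm_num : (-1:ℝ) < 1) (inv_pos.mpr hβ),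
    integral_rpow_mul_exp_neg_mul_rpow hc hq2 (Real.rpow_pos_of_pos hb (-c))]
  have e1 : (β⁻¹ : ℝ) ^ (-(1 + 1) / 1 : ℝ) = β ^ 2 := by
    rw [show (-(1 + 1) / 1 : ℝ) = -2 by norm_num, Real.rpow_neg (inv_nonneg.mpr hβ.le),
      Real.inv_rpow hβ.le, inv_inv, show (2 : ℝ) = ((2 : ℕ) : ℝ) by norm_num,
      Real.rpow_natCast]
  have e2 : ((b : ℝ) ^ (-c : ℝ)) ^ (-(a * c + 1) / c : ℝ) = b ^ (a * c) * b := by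
    rw [← Real.rpow_mul hb.le,
      show (-c) * (-(a * c + 1) / c) = a * c + 1 by field_simp,
      Real.rpow_add hb, Real.rpow_one]
  have e3 : Real.Gamma ((a * c + 1) / c) = Real.Gamma (a + 1 / c) := by
    congr 1; field_simp
  have g2 : Real.Gamma ((1 + 1) / 1) = 1 := by
    rw [show ((1 + 1) / 1 : ℝ) = 1 + 1 by norm_num, Real.Gamma_add_one one_ne_zero,
      Real.Gamma_one, mul_one]
  rw [e1, e2, e3, g2]
  field_simp

lemma aux_Ep (μ A₀ : ℝ) (hμ : 0 < μ) (hA : 0 < A₀) :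
    ∫ h : ℝ, (if 0 < h ∧ h ≤ A₀ then μ ^ 2 / A₀ ^ (μ ^ 2) * h ^ (μ ^ 2 - 1) else 0) * h
      = A₀ * (μ ^ 2 / (1 + μ ^ 2)) := by
  have hA2 : (A₀ : ℝ) ^ ((μ : ℝ) ^ 2) ≠ 0 := (Real.rpow_pos_of_pos hA _).ne'
  have hfun : (fun h : ℝ =>
      (if 0 < h ∧ h ≤ A₀ then μ ^ 2 / A₀ ^ (μ ^ 2) * h ^ (μ ^ 2 - 1) else 0) * h)
      = Set.indicator (Set.Ioc 0 A₀)
          (fun h : ℝ => (μ ^ 2 / A₀ ^ (μ ^ 2)) * h ^ ((μ : ℝ) ^ 2)) := by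
    funext h
    rw [Set.indicator_apply]
    simp only [Set.mem_Ioc]
    split_ifs with hx
    · have h3 : h ^ ((μ : ℝ) ^ 2) = h ^ ((μ : ℝ) ^ 2 - 1) * h := by
        rw [← Real.rpow_add_one hx.1.ne']; norm_num
      rw [h3]; ring
    · simp
  rw [hfun, integral_indicator measurableSet_Ioc, integral_const_mul,
    ← intervalIntegral.integral_of_le hA.le,
    integral_rpow (Or.inl (lt_of_lt_of_le (by norm_num) (sq_nonneg μ))),
    Real.zero_rpow (by positivity : (0:ℝ) < μ ^ 2 + 1).ne',
    Real.rpow_add hA, Real.rpow_one]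
  field_simp
  ring

/-- Average harvested power: E[P_s] with P_s = (1−ρ)η_r P_t·h_a h_t h_p equals
A₀ h_a (1−ρ) η_r P_t·(μ²/(1+μ²))·[αβ + (1−α) b Γ(a+1/c)/Γ(a)]. -/
theorem stmt_10 {Ω : Type*} [MeasureSpace Ω] [IsProbabilityMeasure (ℙ : Measure Ω)]
    (ht hp : Ω → ℝ) (htm : Measurable ht) (hpm : Measurable hp)
    (α β a b c μ A₀ ha ηr Pt ρ : ℝ) (hα0 : 0 ≤ α) (hα1 : α ≤ 1)
    (hβ : 0 < β) (ha' : 0 < a) (hb : 0 < b) (hc : 0 < c)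
    (hμ : 0 < μ) (hA : 0 < A₀) (hha : 0 < ha) (hηr : 0 < ηr) (hPt : 0 < Pt)
    (hρ0 : 0 ≤ ρ) (hρ1 : ρ < 1)
    (hindep : IndepFun ht hp ℙ)
    (hdt : Measure.map ht ℙ = volume.withDensity (fun x => ENNReal.ofReal
        (if 0 < x then
          α / β * Real.exp (-x / β) +
            (1 - α) * (c * x ^ (a * c - 1) / (b ^ (a * c) * Real.Gamma a)) *
              Real.exp (-(x / b) ^ c)
        else 0)))
    (hdp : Measure.map hp ℙ = volume.withDensity (fun h => ENNReal.ofReal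
        (if 0 < h ∧ h ≤ A₀ then μ ^ 2 / A₀ ^ (μ ^ 2) * h ^ (μ ^ 2 - 1) else 0))) :
    ∫ ω, (1 - ρ) * ηr * Pt * (ha * ht ω * hp ω) ∂(ℙ : Measure Ω) =
      A₀ * ha * (1 - ρ) * ηr * Pt * (μ ^ 2 / (1 + μ ^ 2)) *
        (α * β + (1 - α) * b * Real.Gamma (a + 1 / c) / Real.Gamma a) := by
  have hmt : Measurable (fun x : ℝ => if 0 < x then
      α / β * Real.exp (-x / β) +
        (1 - α) * (c * x ^ (a * c - 1) / (b ^ (a * c) * Real.Gamma a)) *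
          Real.exp (-(x / b) ^ c)
    else 0) := by
    apply Measurable.ite (measurableSet_lt measurable_const measurable_id)
    · apply Measurable.add
      · fun_prop
      · fun_prop
    · exact measurable_const
  have hnt : ∀ x : ℝ, 0 ≤ (if 0 < x then
      α / β * Real.exp (-x / β) +
        (1 - α) * (c * x ^ (a * c - 1) / (b ^ (a * c) * Real.Gamma a)) *
          Real.exp (-(x / b) ^ c)
    else 0) := by
    intro x
    split_ifs with hx
    · have h1 : 0 ≤ α / β * Real.exp (-x / β) :=
        mul_nonneg (div_nonneg hα0 hβ.le) (Real.exp_nonneg _)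
      have h2 : 0 ≤ (1 - α) * (c * x ^ (a * c - 1) / (b ^ (a * c) * Real.Gamma a)) *
          Real.exp (-(x / b) ^ c) :=
        mul_nonneg (mul_nonneg (by linarith)
          (div_nonneg (mul_nonneg hc.le (Real.rpow_nonneg hx.le _))
            (mul_nonneg (Real.rpow_pos_of_pos hb _).le (Real.Gamma_pos_of_pos ha').le)))
          (Real.exp_nonneg _)
      linarith
    · exact le_refl 0
  have hmp : Measurable (fun h : ℝ =>
      if 0 < h ∧ h ≤ A₀ then μ ^ 2 / A₀ ^ (μ ^ 2) * h ^ (μ ^ 2 - 1) else 0) := by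
    apply Measurable.ite
    · exact (measurableSet_lt measurable_const measurable_id).inter
        (measurableSet_le measurable_id measurable_const)
    · fun_prop
    · exact measurable_const
  have hnp : ∀ h : ℝ, 0 ≤ (if 0 < h ∧ h ≤ A₀ then
      μ ^ 2 / A₀ ^ (μ ^ 2) * h ^ (μ ^ 2 - 1) else 0) := by
    intro h
    split_ifs with hx
    · exact mul_nonneg (div_nonneg (sq_nonneg μ) (Real.rpow_pos_of_pos hA _).le)
        (Real.rpow_nonneg hx.1.le _)
    · exact le_refl 0
  have Et : ∫ ω, ht ω ∂(ℙ : Measure Ω)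
      = α * β + (1 - α) * b * Real.Gamma (a + 1 / c) / Real.Gamma a := by
    rw [show (∫ ω, ht ω ∂(ℙ : Measure Ω)) = ∫ x, x ∂(Measure.map ht ℙ) from
      (integral_map htm.aemeasurable aestronglyMeasurable_id).symm, hdt,
      aux_integral_id_withDensity _ hmt hnt]
    exact aux_Et α β a b c hα0 hα1 hβ ha' hb hc
  have Ep : ∫ ω, hp ω ∂(ℙ : Measure Ω) = A₀ * (μ ^ 2 / (1 + μ ^ 2)) := by
    rw [show (∫ ω, hp ω ∂(ℙ : Measure Ω)) = ∫ x, x ∂(Measure.map hp ℙ) from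
      (integral_map hpm.aemeasurable aestronglyMeasurable_id).symm, hdp,
      aux_integral_id_withDensity _ hmp hnp]
    exact aux_Ep μ A₀ hμ hA
  calc ∫ ω, (1 - ρ) * ηr * Pt * (ha * ht ω * hp ω) ∂(ℙ : Measure Ω)
      = ((1 - ρ) * ηr * Pt * ha) * ∫ ω, ht ω * hp ω ∂(ℙ : Measure Ω) := by
        rw [← integral_const_mul]
        exact integral_congr_ae (Filter.Eventually.of_forall fun ω => by ring)
    _ = ((1 - ρ) * ηr * Pt * ha) *
          ((∫ ω, ht ω ∂(ℙ : Measure Ω)) * ∫ ω, hp ω ∂(ℙ : Measure Ω)) := by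
        exact congrArg _ (hindep.integral_mul_eq_mul_integral htm.aestronglyMeasurable hpm.aestronglyMeasurable)
    _ = A₀ * ha * (1 - ρ) * ηr * Pt * (μ ^ 2 / (1 + μ ^ 2)) *
        (α * β + (1 - α) * b * Real.Gamma (a + 1 / c) / Real.Gamma a) := by
        rw [Et, Ep]; ring
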